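/- The cone in ℚ² × ℚ³ of tuples (a,b;A,B,C) defined by a,b ≥ 0, A ≥ B ≥ C ≥ 0, A−C ≤ 2b+a ≤ A+B, max(B−C, A−B) ≤ a+b ≤ A+C, and b ≤ min(B+C, A−C) has exactly seven extremal rays, generated by (ϖ₁,ϖ̂₁), (ϖ₁,ϖ̂₂), (ϖ₂,ϖ̂₂), (0,ϖ̂₃), (ϖ₁,ϖ̂₃), (ϖ₂,ϖ̂₁+ϖ̂₃), (ϖ₂,ϖ̂₁+ϖ̂₂), i.e. by the vectors (1,0;1,0,0), (1,0;1,1,0), (0,1;1,1,0), (0,0;1/2,1/2,1/2), (1,0;1/2,1/2,1/2), (0,1;3/2,1/2,1/2), (0,1;2,1,0) in coordinates (a,b;A,B,C). -/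

import Mathlib

/-- `v` generates an extremal ray of the convex cone `C`. -/
def IsExtremalRayGen {V : Type} [AddCommGroup V] [Module ℚ V] (C : Set V) (v : V) : Prop :=
  v ∈ C ∧ v ≠ 0 ∧ ∀ x ∈ C, ∀ y ∈ C, x + y = v → ∃ c : ℚ, x = c • v

/-- The cone `ℚ_{≥0}·LR(G₂, Spin₇)` in coordinates `(a,b;A,B,C)`: `a,b ≥ 0`,
`A ≥ B ≥ C ≥ 0`, `A−C ≤ 2b+a ≤ A+B`, `max(B−C, A−B) ≤ a+b ≤ A+C`,
`b ≤ min(B+C, A−C)`. -/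
def C14 : Set (Fin 5 → ℚ) :=
  {x | 0 ≤ x 0 ∧ 0 ≤ x 1 ∧
    x 3 ≤ x 2 ∧ x 4 ≤ x 3 ∧ 0 ≤ x 4 ∧
    x 2 - x 4 ≤ 2 * x 1 + x 0 ∧ 2 * x 1 + x 0 ≤ x 2 + x 3 ∧
    x 3 - x 4 ≤ x 0 + x 1 ∧ x 2 - x 3 ≤ x 0 + x 1 ∧ x 0 + x 1 ≤ x 2 + x 4 ∧
    x 1 ≤ x 3 + x 4 ∧ x 1 ≤ x 2 - x 4}

/-- The seven generators `(ϖ₁,ϖ̂₁), (ϖ₁,ϖ̂₂), (ϖ₂,ϖ̂₂), (0,ϖ̂₃), (ϖ₁,ϖ̂₃), (ϖ₂,ϖ̂₁+ϖ̂₃),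
(ϖ₂,ϖ̂₁+ϖ̂₂)` in coordinates `(a,b;A,B,C)`. -/
def g14 : Fin 7 → (Fin 5 → ℚ) :=
  ![![1,0,1,0,0], ![1,0,1,1,0], ![0,1,1,1,0],
    ![0,0,1/2,1/2,1/2], ![1,0,1/2,1/2,1/2], ![0,1,3/2,1/2,1/2], ![0,1,2,1,0]]

lemma g14_0 : g14 0 = ![1,0,1,0,0] := rfl
lemma g14_1 : g14 1 = ![1,0,1,1,0] := rfl
lemma g14_2 : g14 2 = ![0,1,1,1,0] := rfl
lemma g14_3 : g14 3 = ![0,0,1/2,1/2,1/2] := rfl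
lemma g14_4 : g14 4 = ![1,0,1/2,1/2,1/2] := rfl
lemma g14_5 : g14 5 = ![0,1,3/2,1/2,1/2] := rfl
lemma g14_6 : g14 6 = ![0,1,2,1,0] := rfl

lemma fin5_cases : ∀ i : Fin 5, i = 0 ∨ i = 1 ∨ i = 2 ∨ i = 3 ∨ i = 4 := by decide

lemma fin7_cases : ∀ k : Fin 7, k = 0 ∨ k = 1 ∨ k = 2 ∨ k = 3 ∨ k = 4 ∨ k = 5 ∨ k = 6 := by
  decide

lemma mem_C14 {x : Fin 5 → ℚ} :
    x ∈ C14 ↔ (0 ≤ x 0 ∧ 0 ≤ x 1 ∧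
      x 3 ≤ x 2 ∧ x 4 ≤ x 3 ∧ 0 ≤ x 4 ∧
      x 2 - x 4 ≤ 2 * x 1 + x 0 ∧ 2 * x 1 + x 0 ≤ x 2 + x 3 ∧
      x 3 - x 4 ≤ x 0 + x 1 ∧ x 2 - x 3 ≤ x 0 + x 1 ∧ x 0 + x 1 ≤ x 2 + x 4 ∧
      x 1 ≤ x 3 + x 4 ∧ x 1 ≤ x 2 - x 4) := Iff.rfl

lemma C14_add {x y : Fin 5 → ℚ} (hx : x ∈ C14) (hy : y ∈ C14) : x + y ∈ C14 := by
  rw [mem_C14] at hx hy ⊢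
  obtain ⟨a1,a2,a3,a4,a5,a6,a7,a8,a9,a10,a11,a12⟩ := hx
  obtain ⟨b1,b2,b3,b4,b5,b6,b7,b8,b9,b10,b11,b12⟩ := hy
  refine ⟨?_,?_,?_,?_,?_,?_,?_,?_,?_,?_,?_,?_⟩ <;>
    simp only [Pi.add_apply] <;> linarith

lemma C14_smul {c : ℚ} (hc : 0 ≤ c) {x : Fin 5 → ℚ} (hx : x ∈ C14) : c • x ∈ C14 := by
  rw [mem_C14] at hx ⊢
  obtain ⟨a1,a2,a3,a4,a5,a6,a7,a8,a9,a10,a11,a12⟩ := hx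
  refine ⟨?_,?_,?_,?_,?_,?_,?_,?_,?_,?_,?_,?_⟩ <;>
    simp only [Pi.smul_apply, smul_eq_mul] <;> nlinarith

lemma g14_mem (k : Fin 7) : g14 k ∈ C14 := by
  rcases fin7_cases k with rfl|rfl|rfl|rfl|rfl|rfl|rfl <;> rw [mem_C14] <;>
    simp [g14_0, g14_1, g14_2, g14_3, g14_4, g14_5, g14_6] <;> norm_num

lemma smul_g_mem {c : ℚ} (hc : 0 ≤ c) (k : Fin 7) : c • g14 k ∈ C14 :=
  C14_smul hc (g14_mem k)

lemma C14_pos {v : Fin 5 → ℚ} (hv : v ∈ C14) (h0 : v ≠ 0) : 0 < v 2 := by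
  rw [mem_C14] at hv
  obtain ⟨a1,a2,a3,a4,a5,a6,a7,a8,a9,a10,a11,a12⟩ := hv
  rcases lt_or_eq_of_le (show (0:ℚ) ≤ v 2 by linarith) with h | h
  · exact h
  · exfalso
    apply h0
    have q0 : v 0 = 0 := by linarith
    have q1 : v 1 = 0 := by linarith
    have q2 : v 2 = 0 := by linarith
    have q3 : v 3 = 0 := by linarith
    have q4 : v 4 = 0 := by linarith
    funext i
    rcases fin5_cases i with rfl|rfl|rfl|rfl|rfl <;> simp only [Pi.zero_apply] <;> assumption

set_option maxHeartbeats 1000000 in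
lemma C14_decomp {v : Fin 5 → ℚ} (hv : v ∈ C14) :
    ∃ c0 c1 c2 c3 c4 c5 c6 : ℚ, 0 ≤ c0 ∧ 0 ≤ c1 ∧ 0 ≤ c2 ∧ 0 ≤ c3 ∧ 0 ≤ c4 ∧ 0 ≤ c5 ∧
      0 ≤ c6 ∧
      v = c0 • g14 0 + c1 • g14 1 + c2 • g14 2 + c3 • g14 3 + c4 • g14 4 +
          c5 • g14 5 + c6 • g14 6 := by
  rw [mem_C14] at hv
  obtain ⟨a1,a2,a3,a4,a5,a6,a7,a8,a9,a10,a11,a12⟩ := hv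
  rcases le_total 0 (v 0 + v 1 - v 2 + v 4) with hf1 | hf1
  · rcases le_total 0 (v 0 + 2*v 1 - v 2 - v 4) with hf2 | hf2
    · rcases le_total 0 (v 0 + v 1 - v 3 - v 4) with hf3 | hf3
      · -- cell (0,1,2,4,5)
        refine ⟨v 0 + v 1 - v 3 - v 4, v 2 + v 3 - v 0 - 2*v 1, v 0 + 2*v 1 - v 2 - v 4, 0,
            v 0 + v 1 - v 2 + v 4, v 2 + v 4 - v 0 - v 1, 0,
            by linarith, by linarith, by linarith, le_refl 0, by linarith, by linarith,
            le_refl 0, ?_⟩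
        funext i
        rcases fin5_cases i with rfl|rfl|rfl|rfl|rfl <;>
          simp [g14_0, g14_1, g14_2, g14_3, g14_4, g14_5, g14_6] <;> ring_nf <;> linarith
      · -- cell (1,2,3,4,5)
        refine ⟨0, v 2 - v 4 - v 1, v 1 - v 2 + v 3, v 3 + v 4 - v 0 - v 1,
            v 0 + v 1 - v 2 + v 4, v 2 - v 3, 0,
            le_refl 0, by linarith, by linarith, by linarith, by linarith, by linarith,
            le_refl 0, ?_⟩
        funext i
        rcases fin5_cases i with rfl|rfl|rfl|rfl|rfl <;>
          simp [g14_0, g14_1, g14_2, g14_3, g14_4, g14_5, g14_6] <;> ring_nf <;> linarith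
    · rcases le_total 0 (v 2 - v 3 - v 1) with hf4 | hf4
      · -- cell (0,1,3,4,5)
        refine ⟨v 2 - v 3 - v 1, v 3 - v 4, 0, v 2 + v 4 - v 0 - 2*v 1,
            v 0 + v 1 - v 2 + v 4, v 1, 0,
            by linarith, by linarith, le_refl 0, by linarith, by linarith, by linarith,
            le_refl 0, ?_⟩
        funext i
        rcases fin5_cases i with rfl|rfl|rfl|rfl|rfl <;>
          simp [g14_0, g14_1, g14_2, g14_3, g14_4, g14_5, g14_6] <;> ring_nf <;> linarith
      · -- cell (1,2,3,4,5)
        refine ⟨0, v 2 - v 4 - v 1, v 1 - v 2 + v 3, v 3 + v 4 - v 0 - v 1,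
            v 0 + v 1 - v 2 + v 4, v 2 - v 3, 0,
            le_refl 0, by linarith, by linarith, by linarith, by linarith, by linarith,
            le_refl 0, ?_⟩
        funext i
        rcases fin5_cases i with rfl|rfl|rfl|rfl|rfl <;>
          simp [g14_0, g14_1, g14_2, g14_3, g14_4, g14_5, g14_6] <;> ring_nf <;> linarith
  · rcases le_total 0 (v 0 + 2*v 1 - v 2 - v 4) with hf2 | hf2
    · rcases le_total 0 (v 0 + v 1 - v 3 - v 4) with hf3 | hf3
      · -- cell (0,1,2,5,6)
        refine ⟨v 0 + v 1 - v 3 - v 4, v 3 + v 4 - v 1, v 0 + 2*v 1 - v 2 - v 4, 0, 0,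
            2*v 4, v 2 - v 0 - v 1 - v 4,
            by linarith, by linarith, by linarith, le_refl 0, le_refl 0, by linarith,
            by linarith, ?_⟩
        funext i
        rcases fin5_cases i with rfl|rfl|rfl|rfl|rfl <;>
          simp [g14_0, g14_1, g14_2, g14_3, g14_4, g14_5, g14_6] <;> ring_nf <;> linarith
      · -- cell (1,2,3,5,6)
        refine ⟨0, v 0, v 1 - v 2 + v 3, v 3 + v 4 - v 0 - v 1, 0,
            v 0 + v 1 - v 3 + v 4, v 2 - v 0 - v 1 - v 4,
            le_refl 0, by linarith, by linarith, by linarith, le_refl 0, by linarith,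
            by linarith, ?_⟩
        funext i
        rcases fin5_cases i with rfl|rfl|rfl|rfl|rfl <;>
          simp [g14_0, g14_1, g14_2, g14_3, g14_4, g14_5, g14_6] <;> ring_nf <;> linarith
    · rcases le_total 0 (v 2 - v 3 - v 1) with hf4 | hf4
      · -- cell (0,1,3,5,6)
        refine ⟨v 2 - v 3 - v 1, v 0 + v 1 - v 2 + v 3, 0, v 2 + v 4 - v 0 - 2*v 1, 0,
            2*v 1 + v 0 - v 2 + v 4, v 2 - v 0 - v 1 - v 4,
            by linarith, by linarith, le_refl 0, by linarith, le_refl 0, by linarith,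
            by linarith, ?_⟩
        funext i
        rcases fin5_cases i with rfl|rfl|rfl|rfl|rfl <;>
          simp [g14_0, g14_1, g14_2, g14_3, g14_4, g14_5, g14_6] <;> ring_nf <;> linarith
      · -- cell (1,2,3,5,6)
        refine ⟨0, v 0, v 1 - v 2 + v 3, v 3 + v 4 - v 0 - v 1, 0,
            v 0 + v 1 - v 3 + v 4, v 2 - v 0 - v 1 - v 4,
            le_refl 0, by linarith, by linarith, by linarith, le_refl 0, by linarith,
            by linarith, ?_⟩
        funext i
        rcases fin5_cases i with rfl|rfl|rfl|rfl|rfl <;>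
          simp [g14_0, g14_1, g14_2, g14_3, g14_4, g14_5, g14_6] <;> ring_nf <;> linarith

lemma g14_prop (k : Fin 7) (x y : Fin 5 → ℚ) (c : ℚ) (hx : x ∈ C14) (hy : y ∈ C14)
    (hxy : x + y = c • g14 k) : ∃ e : ℚ, x = e • g14 k := by
  rw [mem_C14] at hx hy
  obtain ⟨a1,a2,a3,a4,a5,a6,a7,a8,a9,a10,a11,a12⟩ := hx
  obtain ⟨b1,b2,b3,b4,b5,b6,b7,b8,b9,b10,b11,b12⟩ := hy
  have e0 := congrFun hxy 0
  have e1 := congrFun hxy 1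
  have e2 := congrFun hxy 2
  have e3 := congrFun hxy 3
  have e4 := congrFun hxy 4
  rcases fin7_cases k with rfl|rfl|rfl|rfl|rfl|rfl|rfl <;>
    simp [g14_0, g14_1, g14_2, g14_3, g14_4, g14_5, g14_6] at e0 e1 e2 e3 e4
  · exact ⟨x 2, by
      funext i; rcases fin5_cases i with rfl|rfl|rfl|rfl|rfl <;> simp [g14_0] <;> linarith⟩
  · exact ⟨x 2, by
      funext i; rcases fin5_cases i with rfl|rfl|rfl|rfl|rfl <;> simp [g14_1] <;> linarith⟩
  · exact ⟨x 2, by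
      funext i; rcases fin5_cases i with rfl|rfl|rfl|rfl|rfl <;> simp [g14_2] <;> linarith⟩
  · exact ⟨2 * x 2, by
      funext i; rcases fin5_cases i with rfl|rfl|rfl|rfl|rfl <;> simp [g14_3] <;> linarith⟩
  · exact ⟨2 * x 2, by
      funext i; rcases fin5_cases i with rfl|rfl|rfl|rfl|rfl <;> simp [g14_4] <;> linarith⟩
  · exact ⟨x 1, by
      funext i; rcases fin5_cases i with rfl|rfl|rfl|rfl|rfl <;> simp [g14_5] <;> linarith⟩
  · exact ⟨x 1, by
      funext i; rcases fin5_cases i with rfl|rfl|rfl|rfl|rfl <;> simp [g14_6] <;> linarith⟩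

lemma ray_step {v : Fin 5 → ℚ} (hv : IsExtremalRayGen C14 v) (k : Fin 7) {ck : ℚ}
    (hck : 0 < ck) {w : Fin 5 → ℚ} (hw : w ∈ C14) (heq : ck • g14 k + w = v) :
    ∃ c : ℚ, 0 < c ∧ v = c • g14 k := by
  obtain ⟨hvC, hv0, hext⟩ := hv
  obtain ⟨t, ht⟩ := hext _ (smul_g_mem hck.le k) w hw heq
  have hg2 : 0 < g14 k 2 := by
    rcases fin7_cases k with rfl|rfl|rfl|rfl|rfl|rfl|rfl <;>
      simp [g14_0, g14_1, g14_2, g14_3, g14_4, g14_5, g14_6] <;> norm_num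
  have hv2 : 0 < v 2 := C14_pos hvC hv0
  have h2 := congrFun ht 2
  simp only [Pi.smul_apply, smul_eq_mul] at h2
  have hmul : 0 < ck * g14 k 2 := mul_pos hck hg2
  have htpos : 0 < t := by nlinarith
  refine ⟨ck / t, div_pos hck htpos, ?_⟩
  funext i
  have hi := congrFun ht i
  simp only [Pi.smul_apply, smul_eq_mul] at hi ⊢
  rw [div_mul_eq_mul_div, eq_div_iff htpos.ne']
  linarith [hi]

/-- The cone `ℚ_{≥0}·LR(G₂, Spin₇)` defined by the inequalities above has exactly seven
extremal rays, generated by the vectors `(1,0;1,0,0)`, `(1,0;1,1,0)`, `(0,1;1,1,0)`,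
`(0,0;1/2,1/2,1/2)`, `(1,0;1/2,1/2,1/2)`, `(0,1;3/2,1/2,1/2)`, `(0,1;2,1,0)`. -/
theorem extremal_rays_G2_Spin7 :
    ∀ v : Fin 5 → ℚ,
      IsExtremalRayGen C14 v ↔ ∃ (k : Fin 7) (c : ℚ), 0 < c ∧ v = c • g14 k := by
  intro v
  constructor
  · intro hv
    obtain ⟨c0, c1, c2, c3, c4, c5, c6, h0, h1, h2, h3, h4, h5, h6, hsum⟩ := C14_decomp hv.1
    by_cases p0 : 0 < c0
    · exact ⟨0, ray_step hv 0 p0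
        (C14_add (C14_add (C14_add (C14_add (C14_add (smul_g_mem h1 1) (smul_g_mem h2 2))
          (smul_g_mem h3 3)) (smul_g_mem h4 4)) (smul_g_mem h5 5)) (smul_g_mem h6 6))
        (by rw [hsum]; abel)⟩
    by_cases p1 : 0 < c1
    · exact ⟨1, ray_step hv 1 p1
        (C14_add (C14_add (C14_add (C14_add (C14_add (smul_g_mem h0 0) (smul_g_mem h2 2))
          (smul_g_mem h3 3)) (smul_g_mem h4 4)) (smul_g_mem h5 5)) (smul_g_mem h6 6))
        (by rw [hsum]; abel)⟩
    by_cases p2 : 0 < c2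
    · exact ⟨2, ray_step hv 2 p2
        (C14_add (C14_add (C14_add (C14_add (C14_add (smul_g_mem h0 0) (smul_g_mem h1 1))
          (smul_g_mem h3 3)) (smul_g_mem h4 4)) (smul_g_mem h5 5)) (smul_g_mem h6 6))
        (by rw [hsum]; abel)⟩
    by_cases p3 : 0 < c3
    · exact ⟨3, ray_step hv 3 p3
        (C14_add (C14_add (C14_add (C14_add (C14_add (smul_g_mem h0 0) (smul_g_mem h1 1))
          (smul_g_mem h2 2)) (smul_g_mem h4 4)) (smul_g_mem h5 5)) (smul_g_mem h6 6))
        (by rw [hsum]; abel)⟩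
    by_cases p4 : 0 < c4
    · exact ⟨4, ray_step hv 4 p4
        (C14_add (C14_add (C14_add (C14_add (C14_add (smul_g_mem h0 0) (smul_g_mem h1 1))
          (smul_g_mem h2 2)) (smul_g_mem h3 3)) (smul_g_mem h5 5)) (smul_g_mem h6 6))
        (by rw [hsum]; abel)⟩
    by_cases p5 : 0 < c5
    · exact ⟨5, ray_step hv 5 p5
        (C14_add (C14_add (C14_add (C14_add (C14_add (smul_g_mem h0 0) (smul_g_mem h1 1))
          (smul_g_mem h2 2)) (smul_g_mem h3 3)) (smul_g_mem h4 4)) (smul_g_mem h6 6))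
        (by rw [hsum]; abel)⟩
    by_cases p6 : 0 < c6
    · exact ⟨6, ray_step hv 6 p6
        (C14_add (C14_add (C14_add (C14_add (C14_add (smul_g_mem h0 0) (smul_g_mem h1 1))
          (smul_g_mem h2 2)) (smul_g_mem h3 3)) (smul_g_mem h4 4)) (smul_g_mem h5 5))
        (by rw [hsum]; abel)⟩
    · exfalso
      apply hv.2.1
      have q0 : c0 = 0 := le_antisymm (not_lt.mp p0) h0
      have q1 : c1 = 0 := le_antisymm (not_lt.mp p1) h1
      have q2 : c2 = 0 := le_antisymm (not_lt.mp p2) h2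
      have q3 : c3 = 0 := le_antisymm (not_lt.mp p3) h3
      have q4 : c4 = 0 := le_antisymm (not_lt.mp p4) h4
      have q5 : c5 = 0 := le_antisymm (not_lt.mp p5) h5
      have q6 : c6 = 0 := le_antisymm (not_lt.mp p6) h6
      rw [hsum, q0, q1, q2, q3, q4, q5, q6]
      simp
  · rintro ⟨k, c, hc, rfl⟩
    refine ⟨smul_g_mem hc.le k, ?_, ?_⟩
    · have hg2 : 0 < g14 k 2 := by
        rcases fin7_cases k with rfl|rfl|rfl|rfl|rfl|rfl|rfl <;>
          simp [g14_0, g14_1, g14_2, g14_3, g14_4, g14_5, g14_6] <;> norm_num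
      intro h
      have h2 := congrFun h 2
      simp only [Pi.smul_apply, smul_eq_mul, Pi.zero_apply] at h2
      nlinarith
    · intro x hx y hy hxy
      obtain ⟨e, he⟩ := g14_prop k x y c hx hy hxy
      exact ⟨e / c, by rw [he, smul_smul, div_mul_cancel₀ _ hc.ne']⟩
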